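/- For a finite alphabet 𝒳 and a sequence x ∈ 𝒳^k, the size of its type class T_x = { s ∈ 𝒳^k : p̂_s = p̂_x } satisfies |T_x| ≥ 2^{k H(p̂_x)} / (k+1)^{|𝒳|}, where H(p̂_x) is the entropy in bits of the empirical distribution of x. -/

import Mathlib

/-- Empirical distribution of a sequence `y ∈ 𝒳^k`: `p̂_y(c) = (1/k)∑_i 1{y_i = c}`. -/
noncomputable def empDist {𝒳 : Type*} [DecidableEq 𝒳] {k : ℕ} (s : Fin k → 𝒳) (c : 𝒳) : ℝ :=
  (1 / k) * ∑ i, if s i = c then 1 else 0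

open Finset Nat

section Aux

/-- `n! * n^d ≤ (n+d)!` -/
private lemma aux_fact1 (n d : ℕ) : n ! * n ^ d ≤ (n + d)! := by
  induction d with
  | zero => simp
  | succ d ih =>
      calc n ! * n ^ (d + 1) = (n ! * n ^ d) * n := by ring
        _ ≤ (n + d)! * n := Nat.mul_le_mul_right _ ih
        _ ≤ (n + d)! * (n + d + 1) := Nat.mul_le_mul_left _ (by omega)
        _ = (n + (d + 1))! := by rw [← Nat.add_assoc, Nat.factorial_succ, Nat.mul_comm]

/-- `(m+d)! ≤ m! * (m+d)^d` -/
private lemma aux_fact2 (m d : ℕ) : (m + d)! ≤ m ! * (m + d) ^ d := by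
  induction d with
  | zero => simp
  | succ d ih =>
      calc (m + (d + 1))! = (m + d + 1) * (m + d)! := by
            rw [← Nat.add_assoc, Nat.factorial_succ]
        _ ≤ (m + d + 1) * (m ! * (m + d) ^ d) := Nat.mul_le_mul_left _ ih
        _ ≤ (m + d + 1) * (m ! * (m + d + 1) ^ d) := by
            exact Nat.mul_le_mul_left _ (Nat.mul_le_mul_left _ (Nat.pow_le_pow_left (by omega) _))
        _ = m ! * (m + (d + 1)) ^ (d + 1) := by ring_nf
        _ = m ! * (m + (d + 1)) ^ (d + 1) := rfl

/-- key per-letter inequality: `n! * n^m ≤ m! * n^n`. -/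
private lemma aux_key (n m : ℕ) : n ! * n ^ m ≤ m ! * n ^ n := by
  rcases le_total m n with h | h
  · obtain ⟨d, rfl⟩ := Nat.exists_eq_add_of_le h
    calc (m + d)! * (m + d) ^ m ≤ (m ! * (m + d) ^ d) * (m + d) ^ m :=
          Nat.mul_le_mul_right _ (aux_fact2 m d)
      _ = m ! * (m + d) ^ (m + d) := by rw [mul_assoc, ← pow_add, Nat.add_comm d m]
  · obtain ⟨d, rfl⟩ := Nat.exists_eq_add_of_le h
    calc n ! * n ^ (n + d) = (n ! * n ^ d) * n ^ n := by rw [mul_assoc, ← pow_add]; ring_nf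
      _ ≤ (n + d)! * n ^ n := Nat.mul_le_mul_right _ (aux_fact1 n d)

variable {𝒳 : Type*} [Fintype 𝒳] [DecidableEq 𝒳] {k : ℕ}

/-- number of occurrences of `c` in `s` -/
private def cnt (s : Fin k → 𝒳) (c : 𝒳) : ℕ := (univ.filter fun i => s i = c).card

private lemma cnt_le (s : Fin k → 𝒳) (c : 𝒳) : cnt s c ≤ k := by
  simpa [cnt] using (Finset.card_filter_le univ (fun i => s i = c)).trans (by simp)

private lemma sum_cnt (s : Fin k → 𝒳) : ∑ c, cnt s c = k := by
  classical
  have := Finset.card_eq_sum_card_fiberwise (f := s) (s := univ) (t := univ)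
    (fun i _ => mem_univ _)
  simpa [cnt, Finset.card_univ] using this.symm

private lemma empDist_eq_cnt (s : Fin k → 𝒳) (c : 𝒳) :
    empDist s c = (cnt s c : ℝ) / k := by
  rw [empDist, cnt, Finset.card_filter]
  push_cast
  ring

private lemma empDist_eq_iff (hk : 0 < k) (s t : Fin k → 𝒳) :
    empDist s = empDist t ↔ ∀ c, cnt s c = cnt t c := by
  constructor
  · intro h c
    have h2 := congrFun h c
    rw [empDist_eq_cnt, empDist_eq_cnt] at h2
    have hk' : (k : ℝ) ≠ 0 := Nat.cast_ne_zero.2 hk.ne'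
    field_simp at h2
    exact_mod_cast h2
  · intro h
    funext c
    rw [empDist_eq_cnt, empDist_eq_cnt, h c]

private lemma exists_perm {s t : Fin k → 𝒳} (h : ∀ c, cnt t c = cnt s c) :
    ∃ σ : Equiv.Perm (Fin k), s ∘ σ = t := by
  have e : ∀ c, {i // t i = c} ≃ {i // s i = c} := fun c =>
    Fintype.equivOfCardEq (by
      rw [Fintype.card_subtype, Fintype.card_subtype]
      exact h c)
  exact ⟨Equiv.ofFiberEquiv e, funext fun i => Equiv.ofFiberEquiv_map e i⟩

private lemma cnt_comp (s : Fin k → 𝒳) (σ : Equiv.Perm (Fin k)) (c : 𝒳) :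
    cnt (s ∘ σ) c = cnt s c := by
  rw [cnt, cnt, ← Fintype.card_subtype, ← Fintype.card_subtype]
  exact Fintype.card_congr (σ.subtypeEquiv fun i => Iff.rfl)

/-- Orbit–stabilizer formula for a type class. -/
private lemma card_typeclass (s : Fin k → 𝒳) :
    (univ.filter fun t : Fin k → 𝒳 => ∀ c, cnt t c = cnt s c).card * ∏ c, (cnt s c)! = k ! := by
  classical
  set T := univ.filter fun t : Fin k → 𝒳 => ∀ c, cnt t c = cnt s c with hT
  have hmaps : ∀ σ : Equiv.Perm (Fin k), σ ∈ (univ : Finset (Equiv.Perm (Fin k))) →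
      (s ∘ σ) ∈ T := by
    intro σ _
    simp only [hT, mem_filter, mem_univ, true_and]
    exact fun c => cnt_comp s σ c
  have key := Finset.card_eq_sum_card_fiberwise hmaps
  rw [Finset.card_univ, Fintype.card_perm, Fintype.card_fin] at key
  have hfib : ∀ t ∈ T, (univ.filter fun σ : Equiv.Perm (Fin k) => s ∘ σ = t).card
      = ∏ c, (cnt s c)! := by
    intro t ht
    simp only [hT, mem_filter, mem_univ, true_and] at ht
    obtain ⟨σ₀, hσ₀⟩ := exists_perm ht
    have e : {σ : Equiv.Perm (Fin k) // s ∘ σ = t} ≃ {σ : Equiv.Perm (Fin k) // s ∘ σ = s} := by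
      refine Equiv.subtypeEquiv (Equiv.mulRight σ₀⁻¹) fun σ => ?_
      constructor
      · intro hst
        funext i
        have h1 := congrFun hst (σ₀⁻¹ i)
        have h2 := congrFun hσ₀ (σ₀⁻¹ i)
        simp only [Function.comp_apply] at h1 h2 ⊢
        simp only [Equiv.coe_mulRight, Equiv.Perm.coe_mul, Function.comp_apply]
        rw [h1, ← h2, (by simp only [Equiv.Perm.coe_inv, Equiv.apply_symm_apply] : σ₀ (σ₀⁻¹ i) = i)]
      · intro hst
        funext i
        have h1 := congrFun hst (σ₀ i)
        have h2 := congrFun hσ₀ i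
        simp only [Equiv.coe_mulRight, Equiv.Perm.coe_mul, Function.comp_apply,
          Equiv.Perm.coe_inv, Equiv.symm_apply_apply] at h1 h2 ⊢
        rw [← h2, ← h1]
    have := (Fintype.card_congr e).trans (DomMulAct.stabilizer_card s)
    rw [Fintype.card_subtype] at this
    rw [this]
    exact Finset.prod_congr rfl fun c _ => by rw [Fintype.card_subtype]; rfl
  rw [Finset.sum_congr rfl hfib, Finset.sum_const, smul_eq_mul] at key
  exact key.symm

/-- Maximality of the own type class, in ℕ. -/
private lemma max_nat (x s : Fin k → 𝒳) :
    (univ.filter fun t : Fin k → 𝒳 => ∀ c, cnt t c = cnt s c).card * ∏ c, cnt x c ^ cnt s c ≤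
      (univ.filter fun t : Fin k → 𝒳 => ∀ c, cnt t c = cnt x c).card *
        ∏ c, cnt x c ^ cnt x c := by
  classical
  set A := (univ.filter fun t : Fin k → 𝒳 => ∀ c, cnt t c = cnt s c).card with hA
  set B := (univ.filter fun t : Fin k → 𝒳 => ∀ c, cnt t c = cnt x c).card with hB
  have h1 := card_typeclass s
  have h2 := card_typeclass x
  rw [← hA] at h1
  rw [← hB] at h2
  have hP : 0 < (∏ c, (cnt s c)!) * ∏ c, (cnt x c)! :=
    Nat.mul_pos (Finset.prod_pos fun c _ => Nat.factorial_pos _)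
      (Finset.prod_pos fun c _ => Nat.factorial_pos _)
  have hprod : ∏ c, ((cnt x c)! * cnt x c ^ cnt s c) ≤
      ∏ c, ((cnt s c)! * cnt x c ^ cnt x c) :=
    Finset.prod_le_prod (fun c _ => Nat.zero_le _) (fun c _ => aux_key (cnt x c) (cnt s c))
  refine Nat.le_of_mul_le_mul_right ?_ hP
  calc (A * ∏ c, cnt x c ^ cnt s c) * ((∏ c, (cnt s c)!) * ∏ c, (cnt x c)!)
      = (A * ∏ c, (cnt s c)!) * ((∏ c, (cnt x c)!) * ∏ c, cnt x c ^ cnt s c) := by ring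
    _ = k ! * ∏ c, ((cnt x c)! * cnt x c ^ cnt s c) := by rw [h1, Finset.prod_mul_distrib]
    _ ≤ k ! * ∏ c, ((cnt s c)! * cnt x c ^ cnt x c) := Nat.mul_le_mul_left _ hprod
    _ = (B * ∏ c, (cnt x c)!) * ((∏ c, (cnt s c)!) * ∏ c, cnt x c ^ cnt x c) := by
        rw [h2, Finset.prod_mul_distrib]
    _ = (B * ∏ c, cnt x c ^ cnt x c) * ((∏ c, (cnt s c)!) * ∏ c, (cnt x c)!) := by ring

end Aux

open scoped Classical in
/-- Size of a type class: `|T_x| ≥ 2^{k H(p̂_x)} / (k+1)^{|𝒳|}`. -/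
theorem stmt10 {𝒳 : Type*} [Fintype 𝒳] [DecidableEq 𝒳] (k : ℕ) (hk : 0 < k)
    (x : Fin k → 𝒳) :
    (2 : ℝ) ^ ((k : ℝ) * (-∑ c, empDist x c * Real.logb 2 (empDist x c))) /
        ((k : ℝ) + 1) ^ (Fintype.card 𝒳) ≤
      ((Finset.univ.filter fun s : Fin k → 𝒳 => empDist s = empDist x).card : ℝ) := by
  classical
  have hk' : (k : ℝ) ≠ 0 := Nat.cast_ne_zero.2 hk.ne'
  have hkpos : (0 : ℝ) < k := by positivity
  set q : 𝒳 → ℝ := empDist x with hq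
  have hqc : ∀ c, q c = (cnt x c : ℝ) / k := fun c => empDist_eq_cnt x c
  have hqnonneg : ∀ c, 0 ≤ q c := fun c => by rw [hqc]; positivity
  -- the target cardinality
  set B : ℕ := (Finset.univ.filter fun s : Fin k → 𝒳 => empDist s = empDist x).card with hBdef
  have hBcnt : B = (univ.filter fun t : Fin k → 𝒳 => ∀ c, cnt t c = cnt x c).card := by
    rw [hBdef]
    congr 1
    apply Finset.filter_congr
    intro t _
    simpa using empDist_eq_iff hk t x
  -- Z = ∏ q c ^ cnt x c
  set Z : ℝ := ∏ c, q c ^ cnt x c with hZdef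
  have hZpos : 0 < Z := by
    refine Finset.prod_pos fun c _ => ?_
    rcases Nat.eq_zero_or_pos (cnt x c) with h | h
    · simp [h]
    · have : 0 < q c := by rw [hqc]; positivity
      positivity
  -- entropy identity : 2^(k * H) = Z⁻¹
  have hent : (2 : ℝ) ^ ((k : ℝ) * (-∑ c, q c * Real.logb 2 (q c))) = Z⁻¹ := by
    have hkq : ∀ c, (k : ℝ) * q c = cnt x c := fun c => by
      rw [hqc]; field_simp
    have hsum : (k : ℝ) * (-∑ c, q c * Real.logb 2 (q c)) =
        ∑ c, (-(cnt x c : ℝ)) * Real.logb 2 (q c) := by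
      have h1 : (k : ℝ) * ∑ c, q c * Real.logb 2 (q c) =
          ∑ c, (cnt x c : ℝ) * Real.logb 2 (q c) := by
        rw [Finset.mul_sum]
        exact Finset.sum_congr rfl fun c _ => by rw [← mul_assoc, hkq]
      rw [mul_neg, h1, ← Finset.sum_neg_distrib]
      exact Finset.sum_congr rfl fun c _ => (neg_mul _ _).symm
    rw [hsum, Real.rpow_sum_of_pos (by norm_num : (0:ℝ) < 2)]
    rw [hZdef, ← Finset.prod_inv_distrib]
    refine Finset.prod_congr rfl fun c _ => ?_
    rcases Nat.eq_zero_or_pos (cnt x c) with h | h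
    · simp [h]
    · have hqpos : 0 < q c := by rw [hqc]; positivity
      rw [mul_comm, Real.rpow_mul (by norm_num : (0:ℝ) ≤ 2),
        Real.rpow_logb (by norm_num) (by norm_num) hqpos]
      rw [Real.rpow_neg (le_of_lt hqpos), Real.rpow_natCast]
  -- probability of a sequence, grouped per letter
  have hprod_s : ∀ s : Fin k → 𝒳, (∏ i, q (s i)) = ∏ c, q c ^ cnt s c := by
    intro s
    rw [← Finset.prod_fiberwise_of_maps_to (g := s) (t := univ)
      (fun i _ => mem_univ _) (fun i => q (s i))]
    refine Finset.prod_congr rfl fun c _ => ?_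
    rw [Finset.prod_congr rfl (fun i hi => by rw [(Finset.mem_filter.1 hi).2]),
      Finset.prod_const]
    rfl
  -- total probability = 1
  have hsum1 : (∑ s : Fin k → 𝒳, ∏ i, q (s i)) = 1 := by
    have := Finset.prod_univ_sum (fun _ : Fin k => (univ : Finset 𝒳)) (fun _ c => q c)
    rw [Fintype.piFinset_univ] at this
    rw [← this]
    have hq1 : (∑ c, q c) = 1 := by
      have : (∑ c, q c) = (∑ c, (cnt x c : ℝ)) / k := by
        rw [Finset.sum_div]
        exact Finset.sum_congr rfl fun c _ => hqc c
      rw [this, ← Nat.cast_sum, sum_cnt, div_self hk']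
    rw [Finset.prod_congr rfl fun (_ : Fin k) _ => hq1, Finset.prod_const, one_pow]
  -- ∏ q c ^ m c in terms of counts,  when ∑ m = k
  have hqpow : ∀ m : 𝒳 → ℕ, (∑ c, m c = k) →
      (∏ c, q c ^ m c) = (∏ c, (cnt x c : ℝ) ^ m c) / (k : ℝ) ^ k := by
    intro m hm
    calc (∏ c, q c ^ m c) = ∏ c, ((cnt x c : ℝ) ^ m c / (k : ℝ) ^ m c) := by
          exact Finset.prod_congr rfl fun c _ => by rw [hqc, div_pow]
      _ = (∏ c, (cnt x c : ℝ) ^ m c) / ∏ c, (k : ℝ) ^ m c := by rw [Finset.prod_div_distrib]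
      _ = (∏ c, (cnt x c : ℝ) ^ m c) / (k : ℝ) ^ k := by
          rw [Finset.prod_pow_eq_pow_sum, hm]
  -- the type classes grouped over count vectors
  set V : Finset (𝒳 → ℕ) := Finset.image (fun s : Fin k → 𝒳 => cnt s) univ with hV
  have hgroup : (∑ s : Fin k → 𝒳, ∏ i, q (s i)) =
      ∑ v ∈ V, ∑ s ∈ univ.filter (fun s : Fin k → 𝒳 => cnt s = v), ∏ i, q (s i) :=
    (Finset.sum_fiberwise_of_maps_to (fun s _ => Finset.mem_image_of_mem _ (mem_univ _)) _).symm
  -- each inner sum is at most B * Z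
  have hinner : ∀ v ∈ V, (∑ s ∈ univ.filter (fun s : Fin k → 𝒳 => cnt s = v),
      ∏ i, q (s i)) ≤ (B : ℝ) * Z := by
    intro v hv
    obtain ⟨s₀, _, hs₀⟩ := Finset.mem_image.1 hv
    have hfe : (univ.filter fun s : Fin k → 𝒳 => cnt s = v) =
        (univ.filter fun t : Fin k → 𝒳 => ∀ c, cnt t c = cnt s₀ c) := by
      apply Finset.filter_congr
      intro t _
      rw [← hs₀]
      constructor
      · intro h c; rw [h]
      · intro h; funext c; exact h c
    have hterm : ∀ s ∈ univ.filter (fun s : Fin k → 𝒳 => cnt s = v),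
        (∏ i, q (s i)) = ∏ c, q c ^ cnt s₀ c := by
      intro s hs
      rw [hprod_s s]
      have : cnt s = cnt s₀ := by rw [(Finset.mem_filter.1 hs).2, ← hs₀]
      exact Finset.prod_congr rfl fun c _ => by rw [this]
    rw [Finset.sum_congr rfl hterm, Finset.sum_const, nsmul_eq_mul]
    rw [hfe]
    -- now use max_nat
    have hnat := max_nat x s₀
    have hreal : ((univ.filter fun t : Fin k → 𝒳 => ∀ c, cnt t c = cnt s₀ c).card : ℝ) *
        ∏ c, (cnt x c : ℝ) ^ cnt s₀ c ≤
        ((univ.filter fun t : Fin k → 𝒳 => ∀ c, cnt t c = cnt x c).card : ℝ) *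
        ∏ c, (cnt x c : ℝ) ^ cnt x c := by exact_mod_cast hnat
    rw [hqpow (cnt s₀) (sum_cnt s₀), hBcnt, hZdef, hqpow (cnt x) (sum_cnt x),
      mul_div_assoc', mul_div_assoc']
    gcongr
  -- number of types is at most (k+1)^|𝒳|
  have hVcard : (V.card : ℝ) ≤ ((k : ℝ) + 1) ^ (Fintype.card 𝒳) := by
    have hinj : Set.InjOn (fun (v : 𝒳 → ℕ) (c : 𝒳) => (⟨min (v c) k, by omega⟩ : Fin (k+1)))
        ↑V := by
      intro v1 h1 v2 h2 h
      have hb : ∀ v ∈ V, ∀ c, v c ≤ k := by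
        intro v hv c
        obtain ⟨s, _, hs⟩ := Finset.mem_image.1 hv
        rw [← hs]
        exact cnt_le s c
      funext c
      have := congrFun h c
      simp only [Fin.mk.injEq] at this
      rw [min_eq_left (hb v1 h1 c), min_eq_left (hb v2 h2 c)] at this
      exact this
    have := Finset.card_le_card_of_injOn _ (fun v _ => Finset.mem_univ _) hinj
    rw [Finset.card_univ, Fintype.card_fun, Fintype.card_fin] at this
    calc (V.card : ℝ) ≤ ((k + 1) ^ Fintype.card 𝒳 : ℕ) := by exact_mod_cast this
      _ = ((k : ℝ) + 1) ^ (Fintype.card 𝒳) := by push_cast; ring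
  -- assemble: 1 ≤ (k+1)^M * (B * Z)
  have hBZnonneg : (0 : ℝ) ≤ (B : ℝ) * Z := mul_nonneg (Nat.cast_nonneg _) hZpos.le
  have hone : (1 : ℝ) ≤ ((k : ℝ) + 1) ^ (Fintype.card 𝒳) * ((B : ℝ) * Z) := by
    calc (1 : ℝ) = ∑ s : Fin k → 𝒳, ∏ i, q (s i) := hsum1.symm
      _ = ∑ v ∈ V, ∑ s ∈ univ.filter (fun s : Fin k → 𝒳 => cnt s = v), ∏ i, q (s i) := hgroup
      _ ≤ ∑ _v ∈ V, (B : ℝ) * Z := Finset.sum_le_sum hinner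
      _ = (V.card : ℝ) * ((B : ℝ) * Z) := by rw [Finset.sum_const, nsmul_eq_mul]
      _ ≤ ((k : ℝ) + 1) ^ (Fintype.card 𝒳) * ((B : ℝ) * Z) :=
          mul_le_mul_of_nonneg_right hVcard hBZnonneg
  -- finish
  have hC : (0 : ℝ) < ((k : ℝ) + 1) ^ (Fintype.card 𝒳) := by positivity
  rw [hent, div_le_iff₀ hC, inv_eq_one_div, div_le_iff₀ hZpos]
  calc (1 : ℝ) ≤ ((k : ℝ) + 1) ^ (Fintype.card 𝒳) * ((B : ℝ) * Z) := hone
    _ = (B : ℝ) * ((k : ℝ) + 1) ^ (Fintype.card 𝒳) * Z := by ring
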